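/- For every n ≥ 3, the rainbow extremal number of the 4-edge path in the n-dimensional hypercube satisfies ex*(Q_n, P_4) = 3·2^{n-1}. -/

import Mathlib

open SimpleGraph

/-- An edge coloring is proper on `H` if distinct edges of `H` sharing a vertex
receive different colors. -/
def IsProperEdgeColoring {V : Type*} (H : SimpleGraph V) (c : Sym2 V → ℕ) : Prop :=
  ∀ ⦃e₁ : Sym2 V⦄, e₁ ∈ H.edgeSet → ∀ ⦃e₂ : Sym2 V⦄, e₂ ∈ H.edgeSet →
    e₁ ≠ e₂ → (∃ v, v ∈ e₁ ∧ v ∈ e₂) → c e₁ ≠ c e₂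

/-- The graph `H`, edge colored by `c`, contains a rainbow copy of `F`:
there is an (injective) copy of `F` in `H` all of whose edges receive
pairwise distinct colors. -/
def HasRainbowCopy {V W : Type*} (H : SimpleGraph V) (c : Sym2 V → ℕ)
    (F : SimpleGraph W) : Prop :=
  ∃ f : W ↪ V, (∀ ⦃a b : W⦄, F.Adj a b → H.Adj (f a) (f b)) ∧
    ∀ ⦃a b a' b' : W⦄, F.Adj a b → F.Adj a' b' → s(a, b) ≠ s(a', b') →
      c s(f a, f b) ≠ c s(f a', f b')

/-- `H` admits a proper edge coloring with no rainbow copy of `F`. -/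
def RainbowFree {V W : Type*} (H : SimpleGraph V) (F : SimpleGraph W) : Prop :=
  ∃ c : Sym2 V → ℕ, IsProperEdgeColoring H c ∧ ¬ HasRainbowCopy H c F

/-- The rainbow extremal number `ex*(G,F)`: the maximum number of edges of a
subgraph `H` of `G` admitting a proper edge coloring with no rainbow copy of `F`. -/
noncomputable def rainbowExtremalNumber {V W : Type*} [Fintype V]
    (G : SimpleGraph V) (F : SimpleGraph W) : ℕ :=
  sSup {m | ∃ H : SimpleGraph V, H ≤ G ∧ RainbowFree H F ∧ m = H.edgeSet.ncard}

/-- The minimum degree of a subgraph, taken over its own vertex set. -/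
noncomputable def subMinDegree {V : Type*} {G : SimpleGraph V} (H : G.Subgraph) : ℕ :=
  sInf {d | ∃ v ∈ H.verts, d = (H.neighborSet v).ncard}

/-- `δ*(G,F)`: the maximum of the minimum degree over all subgraphs `H` of `G`
admitting a proper edge coloring with no rainbow copy of `F`. -/
noncomputable def rainbowMinDegree {V W : Type*} [Fintype V]
    (G : SimpleGraph V) (F : SimpleGraph W) : ℕ :=
  sSup {m | ∃ H : G.Subgraph, RainbowFree H.spanningCoe F ∧ m = subMinDegree H}

/-- The `n`-dimensional hypercube graph `Q_n`. -/
def cubeGraph (n : ℕ) : SimpleGraph (Fin n → Bool) where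
  Adj x y := {i | x i ≠ y i}.ncard = 1
  symm := by
    constructor
    intro x y h
    have h : {i | x i ≠ y i}.ncard = 1 := h
    show {i | y i ≠ x i}.ncard = 1
    have hs : {i | y i ≠ x i} = {i | x i ≠ y i} := by ext i; simp [ne_comm]
    rw [hs]; exact h
  loopless := by
    constructor
    intro x h
    simp at h

/-- The star `K_{1,k}` with `k` edges. -/
def starGraph (k : ℕ) : SimpleGraph (Fin (k + 1)) where
  Adj i j := i ≠ j ∧ (i = 0 ∨ j = 0)
  symm := by constructor; intro i j h; exact ⟨h.1.symm, h.2.symm⟩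
  loopless := by constructor; intro i h; exact h.1 rfl

/-- `G` contains a copy of `F` as a subgraph. -/
def ContainsCopy {V W : Type*} (G : SimpleGraph V) (F : SimpleGraph W) : Prop :=
  ∃ f : W ↪ V, ∀ ⦃a b : W⦄, F.Adj a b → G.Adj (f a) (f b)

namespace CubeAux

variable {n : ℕ}

lemma cube_adj_iff {x y : Fin n → Bool} :
    (cubeGraph n).Adj x y ↔ ∃ i, x i ≠ y i ∧ ∀ j, j ≠ i → x j = y j := by
  show {i | x i ≠ y i}.ncard = 1 ↔ _
  rw [Set.ncard_eq_one]
  constructor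
  · rintro ⟨a, ha⟩
    refine ⟨a, ?_, ?_⟩
    · have : a ∈ {i | x i ≠ y i} := ha ▸ rfl
      exact this
    · intro j hj
      by_contra hne
      have : j ∈ {i | x i ≠ y i} := hne
      rw [ha] at this
      exact hj this
  · rintro ⟨i, hi, hall⟩
    refine ⟨i, ?_⟩
    ext j
    simp only [Set.mem_setOf_eq, Set.mem_singleton_iff]
    constructor
    · intro h; by_contra hji; exact h (hall j hji)
    · intro h; subst h; exact hi

/-- parity of a vertex -/
def par (x : Fin n → Bool) : ℕ := ∑ i, (if x i then 1 else 0)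

lemma par_adj {x y : Fin n → Bool} (h : (cubeGraph n).Adj x y) :
    par x % 2 ≠ par y % 2 := by
  rw [cube_adj_iff] at h
  obtain ⟨i, hi, hall⟩ := h
  have hx : par x = (∑ j ∈ Finset.univ.erase i, (if x j then 1 else 0)) + (if x i then 1 else 0) := by
    rw [par, ← Finset.sum_erase_add _ _ (Finset.mem_univ i)]
  have hy : par y = (∑ j ∈ Finset.univ.erase i, (if x j then 1 else 0)) + (if y i then 1 else 0) := by
    rw [par, ← Finset.sum_erase_add _ _ (Finset.mem_univ i)]
    congr 1
    apply Finset.sum_congr rfl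
    intro j hj
    rw [hall j (Finset.ne_of_mem_erase hj)]
  cases hx1 : x i <;> cases hy1 : y i
  · rw [hx1, hy1] at hi; simp at hi
  · rw [hx1] at hx; rw [hy1] at hy; simp at hx hy; omega
  · rw [hx1] at hx; rw [hy1] at hy; simp at hx hy; omega
  · rw [hx1, hy1] at hi; simp at hi

lemma cube_triangle_free {x y z : Fin n → Bool} (hxy : (cubeGraph n).Adj x y)
    (hyz : (cubeGraph n).Adj y z) : ¬ (cubeGraph n).Adj x z := by
  intro hxz
  have h1 := par_adj hxy
  have h2 := par_adj hyz
  have h3 := par_adj hxz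
  omega

lemma ne_of_two_steps {x y z w : Fin n → Bool} (h1 : (cubeGraph n).Adj x y)
    (h2 : (cubeGraph n).Adj y z) (h3 : (cubeGraph n).Adj z w) : x ≠ w := by
  intro he
  subst he
  have p1 := par_adj h1
  have p2 := par_adj h2
  have p3 := par_adj h3
  omega

/-- Two non-adjacent distinct vertices have at most 2 common neighbours. -/
lemma common_nbrs {a b v₁ v₂ v₃ : Fin n → Bool} (hab : a ≠ b) (hnadj : ¬ (cubeGraph n).Adj a b)
    (h1a : (cubeGraph n).Adj v₁ a) (h1b : (cubeGraph n).Adj v₁ b)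
    (h2a : (cubeGraph n).Adj v₂ a) (h2b : (cubeGraph n).Adj v₂ b)
    (h3a : (cubeGraph n).Adj v₃ a) (h3b : (cubeGraph n).Adj v₃ b)
    (h12 : v₁ ≠ v₂) (h13 : v₁ ≠ v₃) (h23 : v₂ ≠ v₃) : False := by
  -- for each v, get the index where it differs from a; it lies in the diff set of a,b
  -- diff set of a b has ≤ 2 elements; map v ↦ index injective
  have key : ∀ v : Fin n → Bool, (cubeGraph n).Adj v a → (cubeGraph n).Adj v b →
      ∃ i, v i ≠ a i ∧ (∀ j, j ≠ i → v j = a j) ∧ a i ≠ b i := by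
    intro v hva hvb
    obtain ⟨i, hi, halli⟩ := cube_adj_iff.mp hva
    obtain ⟨k, hk, hallk⟩ := cube_adj_iff.mp hvb
    refine ⟨i, hi, halli, ?_⟩
    by_cases hai : a i = b i
    case neg => exact hai
    exfalso
    -- a i = b i, v i ≠ a i so v i ≠ b i hence k = i
    have hki : k = i := by
      by_contra hki
      exact hi ((hallk i (fun h => hki h.symm)).trans hai.symm)
    subst hki
    -- then a = b off k, and a k = b k, so a = b
    apply hab
    funext j
    by_cases hj : j = k
    · subst hj; exact hai
    · rw [← halli j hj, hallk j hj]
  obtain ⟨i₁, hd1, ho1, hs1⟩ := key v₁ h1a h1b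
  obtain ⟨i₂, hd2, ho2, hs2⟩ := key v₂ h2a h2b
  obtain ⟨i₃, hd3, ho3, hs3⟩ := key v₃ h3a h3b
  -- v determined by its index: injective
  have vdet : ∀ (v : Fin n → Bool) (i : Fin n), v i ≠ a i → (∀ j, j ≠ i → v j = a j) →
      v = fun j => if j = i then !(a j) else a j := by
    intro v i hvi hall
    funext j
    by_cases hj : j = i
    · subst hj; simp only [if_pos rfl]
      cases hb : a j <;> cases hv : v j <;> simp_all
    · simp only [if_neg hj]; exact hall j hj
  -- indices pairwise distinct
  have hne : ∀ {v w : Fin n → Bool} {iv iw : Fin n}, v ≠ w →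
      v iv ≠ a iv → (∀ j, j ≠ iv → v j = a j) →
      w iw ≠ a iw → (∀ j, j ≠ iw → w j = a j) → iv ≠ iw := by
    intro v w iv iw hvw hv hvall hw hwall he
    subst he
    exact hvw ((vdet v iv hv hvall).trans (vdet w iv hw hwall).symm)
  have h12' := hne h12 hd1 ho1 hd2 ho2
  have h13' := hne h13 hd1 ho1 hd3 ho3
  have h23' := hne h23 hd2 ho2 hd3 ho3
  -- all three indices lie in diff(a,b); but diff(a,b) ⊆ {i₁, i₂} ∪ ... derive card contradiction:
  -- diff(a,b) ⊆ diff(a,v₁) ∪ diff(v₁,b) = {i₁, k₁}. Simpler: diff(a,b) as set: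
  -- v₁ differs a at i₁ only and differs b at one index k₁. For j ∉ {i₁, k₁}: a j = v₁ j = b j.
  obtain ⟨k₁, hk1, hallk1⟩ := cube_adj_iff.mp h1b
  have hsub : ∀ j, a j ≠ b j → j = i₁ ∨ j = k₁ := by
    intro j hj
    by_contra hcon
    push_neg at hcon
    exact hj ((ho1 j hcon.1).symm.trans (hallk1 j hcon.2))
  rcases hsub i₂ hs2 with h2c | h2c
  · exact h12' h2c.symm
  rcases hsub i₃ hs3 with h3c | h3c
  · exact h13' h3c.symm
  exact h23' (h2c.trans h3c.symm)





lemma path_edge_mem (a b : Fin 5) (h : (pathGraph 5).Adj a b) :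
    s(a,b) = s((0:Fin 5),(1:Fin 5)) ∨ s(a,b) = s((1:Fin 5),(2:Fin 5)) ∨
    s(a,b) = s((2:Fin 5),(3:Fin 5)) ∨ s(a,b) = s((3:Fin 5),(4:Fin 5)) := by
  rw [pathGraph_adj] at h
  fin_cases a <;> fin_cases b <;> simp_all

variable {V : Type*} {H : SimpleGraph V} {c : Sym2 V → ℕ}

/-- properness at a common vertex -/
lemma properNe (hc : IsProperEdgeColoring H c) {x y z : V} (hxy : H.Adj x y)
    (hyz : H.Adj y z) (hxz : x ≠ z) : c s(x,y) ≠ c s(y,z) := by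
  have h1 : s(x,y) ∈ H.edgeSet := hxy
  have h2 : s(y,z) ∈ H.edgeSet := hyz
  have hne : s(x,y) ≠ s(y,z) := by
    intro h
    rw [Sym2.eq_iff] at h
    rcases h with ⟨h1, h2⟩ | ⟨h1, h2⟩
    · exact hxz (h1.trans h2)
    · exact hxz h1
  exact hc h1 h2 hne ⟨y, by simp, by simp⟩

lemma no_rainbow_path (hnr : ¬ HasRainbowCopy H c (pathGraph 5))
    {p0 p1 p2 p3 p4 : V}
    (h01 : H.Adj p0 p1) (h12 : H.Adj p1 p2) (h23 : H.Adj p2 p3) (h34 : H.Adj p3 p4)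
    (h02 : p0 ≠ p2) (h13 : p1 ≠ p3) (h24 : p2 ≠ p4) (h04 : p0 ≠ p4)
    (h03 : p0 ≠ p3) (h14 : p1 ≠ p4)
    (hc1 : c s(p0,p1) ≠ c s(p1,p2)) (hc2 : c s(p0,p1) ≠ c s(p2,p3))
    (hc3 : c s(p0,p1) ≠ c s(p3,p4)) (hc4 : c s(p1,p2) ≠ c s(p2,p3))
    (hc5 : c s(p1,p2) ≠ c s(p3,p4)) (hc6 : c s(p2,p3) ≠ c s(p3,p4)) : False := by
  apply hnr
  have h10 := h01.symm; have h21 := h12.symm; have h32 := h23.symm; have h43 := h34.symm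
  have e01 := h01.ne; have e12 := h12.ne; have e23 := h23.ne; have e34 := h34.ne
  have e10 := e01.symm; have e20 := h02.symm; have e30 := h03.symm; have e40 := h04.symm
  have e21 := e12.symm; have e31 := h13.symm; have e41 := h14.symm
  have e32 := e23.symm; have e42 := h24.symm; have e43 := e34.symm
  have hinj : Function.Injective (![p0, p1, p2, p3, p4] : Fin 5 → V) := by
    intro a b hab
    fin_cases a <;> fin_cases b <;> simp_all
  refine ⟨⟨![p0, p1, p2, p3, p4], hinj⟩, ?_, ?_⟩
  · intro a b hab
    rw [pathGraph_adj] at hab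
    fin_cases a <;> fin_cases b <;> simp_all
  · intro a b a' b' hab hab' hne
    rw [← Sym2.map_pair_eq, ← Sym2.map_pair_eq]
    rcases path_edge_mem a b hab with h | h | h | h <;>
      rcases path_edge_mem a' b' hab' with h' | h' | h' | h' <;>
        rw [h, h'] at hne ⊢ <;>
          first
          | (exfalso; exact hne rfl)
          | (simp only [Sym2.map_pair_eq, Function.Embedding.coeFn_mk]
             simp only [Matrix.cons_val_zero, Matrix.cons_val_one, Matrix.head_cons,
               Matrix.cons_val_two, Matrix.tail_cons, Matrix.cons_val_three,
               Matrix.cons_val_four]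
             first
             | exact hc1 | exact hc2 | exact hc3 | exact hc4 | exact hc5 | exact hc6
             | exact hc1.symm | exact hc2.symm | exact hc3.symm | exact hc4.symm
             | exact hc5.symm | exact hc6.symm)

section Main

variable {n : ℕ} {H : SimpleGraph (Fin n → Bool)} [DecidableRel H.Adj]
  {c : Sym2 (Fin n → Bool) → ℕ}

/-- H-triangle-freeness inherited from the cube. -/
lemma Htri (hH : H ≤ cubeGraph n) {x y z : Fin n → Bool}
    (h1 : H.Adj x y) (h2 : H.Adj y z) : ¬ H.Adj x z :=
  fun h3 => cube_triangle_free (hH h1) (hH h2) (hH h3)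

lemma exists_t (hc : IsProperEdgeColoring H c) (y v x : Fin n → Bool) (δ β : ℕ)
    (hcard : 3 ≤ (((H.neighborFinset y).erase v).erase x).card) :
    ∃ t, H.Adj y t ∧ t ≠ v ∧ t ≠ x ∧ c s(y,t) ≠ δ ∧ c s(y,t) ≠ β := by
  by_contra hcon
  push_neg at hcon
  have hsub : (((H.neighborFinset y).erase v).erase x) ⊆ H.neighborFinset y :=
    (Finset.erase_subset _ _).trans (Finset.erase_subset _ _)
  have hmap : ∀ t ∈ ((H.neighborFinset y).erase v).erase x,
      c s(y,t) ∈ ({δ, β} : Finset ℕ) := by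
    intro t ht
    have hadj : H.Adj y t := by
      have := hsub ht
      rwa [SimpleGraph.mem_neighborFinset] at this
    have htv : t ≠ v := Finset.ne_of_mem_erase (Finset.mem_of_mem_erase ht)
    have htx : t ≠ x := Finset.ne_of_mem_erase ht
    have h' := hcon t hadj htv htx
    by_cases hd : c s(y,t) = δ
    · simp [hd]
    · simp [h' hd]
  have hinj : Set.InjOn (fun t => c s(y,t)) (((H.neighborFinset y).erase v).erase x) := by
    intro t1 h1 t2 h2 he
    by_contra hne
    have a1 : H.Adj y t1 := by have := hsub h1; rwa [SimpleGraph.mem_neighborFinset] at this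
    have a2 : H.Adj y t2 := by have := hsub h2; rwa [SimpleGraph.mem_neighborFinset] at this
    have := properNe (hc) a1.symm a2 hne
    rw [Sym2.eq_swap (a := t1) (b := y)] at this
    exact this he
  have hle := Finset.card_le_card_of_injOn (fun t => c s(y,t)) hmap hinj
  have : (({δ, β} : Finset ℕ)).card ≤ 2 := Finset.card_insert_le _ _ |>.trans (by simp)
  omega

lemma stepA (hH : H ≤ cubeGraph n) (hc : IsProperEdgeColoring H c)
    (hnr : ¬ HasRainbowCopy H c (pathGraph 5)) {y v u x : Fin n → Bool}
    (hyv : H.Adj y v) (hvu : H.Adj v u) (huy : u ≠ y)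
    (hdeg : 4 ≤ (H.neighborFinset y).card)
    (hux : H.Adj u x) (hxv : x ≠ v) (hxNy : ¬ H.Adj y x) :
    c s(x,u) = c s(v,y) := by
  by_contra hδ
  -- cardinality of the erased set
  have hvy : v ∈ H.neighborFinset y := by rwa [SimpleGraph.mem_neighborFinset]
  have hxny : x ∉ (H.neighborFinset y).erase v := by
    intro hx
    exact hxNy (by have := Finset.mem_of_mem_erase hx
                   rwa [SimpleGraph.mem_neighborFinset] at this)
  have hcard : 3 ≤ (((H.neighborFinset y).erase v).erase x).card := by
    rw [Finset.erase_eq_of_notMem hxny, Finset.card_erase_of_mem hvy]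
    omega
  obtain ⟨t, hyt, htv, htx, ht1, ht2⟩ := exists_t hc y v x (c s(x,u)) (c s(u,v)) hcard
  -- triangle facts
  have hnuy : ¬ H.Adj u y := Htri hH hvu.symm hyv.symm
  have hnyu : ¬ H.Adj y u := fun h => hnuy h.symm
  -- apply no_rainbow_path with x u v y t
  refine no_rainbow_path hnr (p0 := x) (p1 := u) (p2 := v) (p3 := y) (p4 := t)
    hux.symm hvu.symm hyv.symm hyt hxv huy htv.symm ?_ ?_ ?_ ?_ hδ ?_ ?_ ?_ ?_
  · -- x ≠ t
    intro he; subst he; exact hxNy hyt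
  · -- x ≠ y
    intro he; subst he; exact hnyu hux.symm
  · -- u ≠ t
    intro he
    rw [he] at hnyu
    exact hnyu hyt
  · -- c s(x,u) ≠ c s(u,v)
    exact properNe hc hux.symm hvu.symm hxv
  · -- c s(x,u) ≠ c s(y,t)
    exact fun h => ht1 h.symm
  · -- c s(u,v) ≠ c s(v,y)
    exact properNe hc hvu.symm hyv.symm huy
  · exact fun h => ht2 h.symm
  · exact properNe hc hyv.symm hyt htv.symm


lemma main_lemma (hH : H ≤ cubeGraph n) (hc : IsProperEdgeColoring H c)
    (hnr : ¬ HasRainbowCopy H c (pathGraph 5)) {y v u : Fin n → Bool}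
    (hyv : H.Adj y v) (hvu : H.Adj v u) (huy : u ≠ y)
    (hdeg : 4 ≤ (H.neighborFinset y).card) :
    (H.neighborFinset u).card ≤ 2 := by
  by_contra hcon
  push_neg at hcon
  have hvNu : v ∈ H.neighborFinset u := by
    rw [SimpleGraph.mem_neighborFinset]; exact hvu.symm
  have hcard2 : 2 ≤ ((H.neighborFinset u).erase v).card := by
    rw [Finset.card_erase_of_mem hvNu]; omega
  obtain ⟨x1, hx1, x2, hx2, hx12⟩ := Finset.one_lt_card.mp (by omega : 1 < ((H.neighborFinset u).erase v).card)
  have hux1 : H.Adj u x1 := by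
    have := Finset.mem_of_mem_erase hx1; rwa [SimpleGraph.mem_neighborFinset] at this
  have hux2 : H.Adj u x2 := by
    have := Finset.mem_of_mem_erase hx2; rwa [SimpleGraph.mem_neighborFinset] at this
  have hx1v : x1 ≠ v := Finset.ne_of_mem_erase hx1
  have hx2v : x2 ≠ v := Finset.ne_of_mem_erase hx2
  have hnuy : ¬ H.Adj u y := Htri hH hvu.symm hyv.symm
  by_cases hy1 : H.Adj y x1 <;> by_cases hy2 : H.Adj y x2
  · -- both adjacent: three common neighbours of u and y
    exact common_nbrs huy (cube_triangle_free (hH hvu.symm) (hH hyv.symm))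
      (hH hvu) (hH hyv.symm) (hH hux1.symm) (hH hy1.symm) (hH hux2.symm) (hH hy2.symm)
      (fun h => hx1v h.symm) (fun h => hx2v h.symm) hx12
  · -- x1 adjacent, x2 not
    have hA : c s(x2,u) = c s(v,y) := stepA hH hc hnr hyv hvu huy hdeg hux2 hx2v hy2
    have hB : c s(x2,u) = c s(x1,y) :=
      stepA hH hc hnr hy1 hux1.symm huy hdeg hux2 (fun h => hx12 h.symm) hy2
    have hne : c s(v,y) ≠ c s(y,x1) :=
      properNe hc hyv.symm hy1 (fun h => hx1v h.symm)
    rw [Sym2.eq_swap (a := y) (b := x1)] at hne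
    exact hne (hA.symm.trans hB)
  · -- x2 adjacent, x1 not
    have hA : c s(x1,u) = c s(v,y) := stepA hH hc hnr hyv hvu huy hdeg hux1 hx1v hy1
    have hB : c s(x1,u) = c s(x2,y) :=
      stepA hH hc hnr hy2 hux2.symm huy hdeg hux1 hx12 hy1
    have hne : c s(v,y) ≠ c s(y,x2) :=
      properNe hc hyv.symm hy2 (fun h => hx2v h.symm)
    rw [Sym2.eq_swap (a := y) (b := x2)] at hne
    exact hne (hA.symm.trans hB)
  · -- neither adjacent
    have hA : c s(x1,u) = c s(v,y) := stepA hH hc hnr hyv hvu huy hdeg hux1 hx1v hy1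
    have hB : c s(x2,u) = c s(v,y) := stepA hH hc hnr hyv hvu huy hdeg hux2 hx2v hy2
    have hne : c s(x1,u) ≠ c s(u,x2) := properNe hc hux1.symm hux2 hx12
    rw [Sym2.eq_swap (a := u) (b := x2)] at hne
    exact hne (hA.trans hB.symm)


end Main

section Count

variable {n : ℕ} (H : SimpleGraph (Fin n → Bool)) [DecidableRel H.Adj]
  {c : Sym2 (Fin n → Bool) → ℕ}

/-- big vertices: degree at least 4 -/
def bigV (y : Fin n → Bool) : Prop := 4 ≤ H.degree y

/-- low vertices: degree 1 or 2 -/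
def lowV (u : Fin n → Bool) : Prop := H.degree u = 1 ∨ H.degree u = 2

/-- has a big neighbour -/
def hasBigV (u : Fin n → Bool) : Prop := ∃ y, H.Adj u y ∧ bigV H y

/-- relay vertices -/
def relV (v : Fin n → Bool) : Prop := H.degree v = 3 ∧ hasBigV H v

instance : DecidablePred (bigV H) := fun y => inferInstanceAs (Decidable (4 ≤ H.degree y))
instance : DecidablePred (lowV H) := fun u => inferInstanceAs (Decidable (_ ∨ _))
instance : DecidablePred (hasBigV H) := fun u => Fintype.decidableExistsFintype
instance : DecidablePred (relV H) := fun v => inferInstanceAs (Decidable (_ ∧ _))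

/-- charge sent from a low vertex to a neighbour -/
def phiC (u v : Fin n → Bool) : ℕ :=
  if H.Adj u v ∧ lowV H u ∧ bigV H v then 2
  else if H.Adj u v ∧ lowV H u ∧ ¬ hasBigV H u ∧ relV H v then 1 else 0

/-- charge received by a big vertex `y` from a neighbour `v` -/
def PhiC (v y : Fin n → Bool) : ℕ :=
  if H.Adj v y ∧ bigV H y then
    (if lowV H v then 2 else if H.degree v = 3 then ∑ u, phiC H u v else 0)
  else 0

variable {H}

lemma phiC_le_two (u v : Fin n → Bool) : phiC H u v ≤ 2 := by
  unfold phiC; split <;> [omega; (split <;> omega)]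

lemma phiC_eq_zero_of_not_adj {u v : Fin n → Bool} (h : ¬ H.Adj u v) : phiC H u v = 0 := by
  unfold phiC
  rw [if_neg (fun hh => h hh.1), if_neg (fun hh => h hh.1)]

lemma phiC_eq_zero_of_not_low {u v : Fin n → Bool} (h : ¬ lowV H u) : phiC H u v = 0 := by
  unfold phiC
  rw [if_neg (fun hh => h hh.2.1), if_neg (fun hh => h hh.2.1)]

lemma phiC_rel_eq_zero {u v : Fin n → Bool} (h : ¬ (lowV H u ∧ ¬ hasBigV H u))
    (hv : relV H v) : phiC H u v = 0 := by
  unfold phiC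
  have h1 : ¬ (H.Adj u v ∧ lowV H u ∧ bigV H v) := by
    rintro ⟨-, -, hb⟩
    have := hv.1
    unfold bigV at hb
    omega
  rw [if_neg h1, if_neg (fun hh => h ⟨hh.2.1, hh.2.2.1⟩)]

/-- uniqueness of big neighbours -/
lemma unique_big (hH : H ≤ cubeGraph n) (hc : IsProperEdgeColoring H c)
    (hnr : ¬ HasRainbowCopy H c (pathGraph 5)) {v y1 y2 : Fin n → Bool}
    (h1 : H.Adj v y1) (h2 : H.Adj v y2) (hb1 : bigV H y1) (hb2 : bigV H y2) :
    y1 = y2 := by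
  by_contra hne
  have := main_lemma hH hc hnr h1.symm h2 (fun h => hne h.symm) hb1
  unfold bigV at hb2
  rw [SimpleGraph.degree] at hb2
  omega

lemma sum_phiC_le (hH : H ≤ cubeGraph n) (hc : IsProperEdgeColoring H c)
    (hnr : ¬ HasRainbowCopy H c (pathGraph 5)) (u : Fin n → Bool) :
    ∑ v, phiC H u v ≤ 2 := by
  by_cases hl : lowV H u
  · by_cases hb : hasBigV H u
    · obtain ⟨y0, hy0, hby0⟩ := hb
      have : ∀ v, v ≠ y0 → phiC H u v = 0 := by
        intro v hv
        unfold phiC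
        have n1 : ¬ (H.Adj u v ∧ lowV H u ∧ bigV H v) := by
          rintro ⟨ha, -, hbv⟩
          exact hv (unique_big hH hc hnr ha hy0 hbv hby0)
        have n2 : ¬ (H.Adj u v ∧ lowV H u ∧ ¬ hasBigV H u ∧ relV H v) := by
          rintro ⟨-, -, hnb, -⟩
          exact hnb ⟨y0, hy0, hby0⟩
        rw [if_neg n1, if_neg n2]
      calc ∑ v, phiC H u v = phiC H u y0 := Finset.sum_eq_single y0
            (fun v _ hv => this v hv) (by intro h; exact absurd (Finset.mem_univ y0) h)
        _ ≤ 2 := phiC_le_two u y0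
    · have hstep : ∀ v, phiC H u v ≤ if H.Adj u v then 1 else 0 := by
        intro v
        unfold phiC
        by_cases ha : H.Adj u v
        · rw [if_pos ha]
          have n1 : ¬ (H.Adj u v ∧ lowV H u ∧ bigV H v) := by
            rintro ⟨-, -, hbv⟩
            exact hb ⟨v, ha, hbv⟩
          rw [if_neg n1]
          split <;> omega
        · rw [if_neg ha, if_neg (fun hh => ha hh.1), if_neg (fun hh => ha hh.1)]
      calc ∑ v, phiC H u v ≤ ∑ v, if H.Adj u v then 1 else 0 := Finset.sum_le_sum (fun v _ => hstep v)
        _ = (Finset.univ.filter (fun v => H.Adj u v)).card :=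
            (Finset.card_filter _ _).symm
        _ = H.degree u := by
            rw [SimpleGraph.degree, SimpleGraph.neighborFinset_eq_filter]
        _ ≤ 2 := by unfold lowV at hl; omega
  · calc ∑ v, phiC H u v = ∑ v, 0 :=
        Finset.sum_congr rfl (fun v _ => phiC_eq_zero_of_not_low hl)
      _ ≤ 2 := by simp


lemma relay_receives (hH : H ≤ cubeGraph n) (hc : IsProperEdgeColoring H c)
    (hnr : ¬ HasRainbowCopy H c (pathGraph 5)) {v : Fin n → Bool} (hrel : relV H v) :
    2 ≤ ∑ u, phiC H u v := by
  obtain ⟨hdeg3, y, hvy, hby⟩ := hrel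
  have hyN : y ∈ H.neighborFinset v := by rwa [SimpleGraph.mem_neighborFinset]
  have hcard : ((H.neighborFinset v).erase y).card = 2 := by
    rw [Finset.card_erase_of_mem hyN]
    rw [SimpleGraph.degree] at hdeg3
    omega
  have hone : ∀ u ∈ (H.neighborFinset v).erase y, phiC H u v = 1 := by
    intro u hu
    have hAdj : H.Adj v u := by
      have := Finset.mem_of_mem_erase hu; rwa [SimpleGraph.mem_neighborFinset] at this
    have hne : u ≠ y := Finset.ne_of_mem_erase hu
    have hlow : lowV H u := by
      have h2 := main_lemma hH hc hnr hvy.symm hAdj hne hby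
      have h1 : 0 < (H.neighborFinset u).card :=
        Finset.card_pos.mpr ⟨v, by rw [SimpleGraph.mem_neighborFinset]; exact hAdj.symm⟩
      unfold lowV SimpleGraph.degree
      omega
    have hnb : ¬ hasBigV H u := by
      rintro ⟨z, huz, hbz⟩
      have hvz : v ≠ z := by
        rintro rfl
        have : (4:ℕ) ≤ H.degree v := hbz
        omega
      have := main_lemma hH hc hnr huz.symm hAdj.symm hvz hbz
      rw [SimpleGraph.degree] at hdeg3
      omega
    have hnbig : ¬ bigV H v := by unfold bigV; omega
    unfold phiC
    rw [if_neg (fun hh => hnbig hh.2.2), if_pos ⟨hAdj.symm, hlow, hnb, hdeg3, y, hvy, hby⟩]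
  calc (2:ℕ) = ∑ u ∈ (H.neighborFinset v).erase y, phiC H u v := by
        rw [Finset.sum_congr rfl hone, Finset.sum_const, hcard]; rfl
    _ ≤ ∑ u, phiC H u v :=
        Finset.sum_le_sum_of_subset (Finset.subset_univ _)

lemma big_receives (hH : H ≤ cubeGraph n) (hc : IsProperEdgeColoring H c)
    (hnr : ¬ HasRainbowCopy H c (pathGraph 5)) {y : Fin n → Bool} (hby : bigV H y) :
    2 * (H.degree y - 1) ≤ ∑ v, PhiC H v y := by
  have hb1 : ((H.neighborFinset y).filter (bigV H)).card ≤ 1 := by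
    apply Finset.card_le_one.mpr
    intro a ha b hb
    rw [Finset.mem_filter, SimpleGraph.mem_neighborFinset] at ha hb
    exact unique_big hH hc hnr ha.1 hb.1 ha.2 hb.2
  have hsplit := Finset.card_filter_add_card_filter_not
    (s := H.neighborFinset y) (p := bigV H)
  have hScard : H.degree y - 1 ≤ ((H.neighborFinset y).filter (fun v => ¬ bigV H v)).card := by
    rw [SimpleGraph.degree]
    omega
  have htwo : ∀ v ∈ (H.neighborFinset y).filter (fun v => ¬ bigV H v), 2 ≤ PhiC H v y := by
    intro v hv
    rw [Finset.mem_filter, SimpleGraph.mem_neighborFinset] at hv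
    obtain ⟨hadj, hnb⟩ := hv
    unfold PhiC
    rw [if_pos ⟨hadj.symm, hby⟩]
    by_cases hl : lowV H v
    · rw [if_pos hl]
    · rw [if_neg hl]
      have hdeg3 : H.degree v = 3 := by
        have h1 : 0 < (H.neighborFinset v).card :=
          Finset.card_pos.mpr ⟨y, by rw [SimpleGraph.mem_neighborFinset]; exact hadj.symm⟩
        unfold lowV at hl
        unfold bigV at hnb
        rw [SimpleGraph.degree] at *
        omega
      rw [if_pos hdeg3]
      exact relay_receives hH hc hnr ⟨hdeg3, y, hadj.symm, hby⟩
  calc 2 * (H.degree y - 1)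
      ≤ 2 * ((H.neighborFinset y).filter (fun v => ¬ bigV H v)).card := by omega
    _ = ∑ _v ∈ (H.neighborFinset y).filter (fun v => ¬ bigV H v), 2 := by
        rw [Finset.sum_const]; ring
    _ ≤ ∑ v ∈ (H.neighborFinset y).filter (fun v => ¬ bigV H v), PhiC H v y :=
        Finset.sum_le_sum htwo
    _ ≤ ∑ v, PhiC H v y := Finset.sum_le_sum_of_subset (Finset.subset_univ _)


lemma column_bound (hH : H ≤ cubeGraph n) (hc : IsProperEdgeColoring H c)
    (hnr : ¬ HasRainbowCopy H c (pathGraph 5)) (v : Fin n → Bool) :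
    ∑ y, PhiC H v y ≤
      (if lowV H v ∧ hasBigV H v then 2 else 0) +
      (if relV H v then ∑ u, phiC H u v else 0) := by
  by_cases hb : hasBigV H v
  · obtain ⟨y0, hy0, hby0⟩ := hb
    have hzero : ∀ y, y ≠ y0 → PhiC H v y = 0 := by
      intro y hy
      unfold PhiC
      rw [if_neg]
      rintro ⟨hadj, hbig⟩
      exact hy (unique_big hH hc hnr hadj hy0 hbig hby0)
    have hsum : ∑ y, PhiC H v y = PhiC H v y0 :=
      Finset.sum_eq_single y0 (fun y _ hy => hzero y hy)
        (fun h => absurd (Finset.mem_univ y0) h)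
    rw [hsum]
    unfold PhiC
    rw [if_pos ⟨hy0, hby0⟩]
    by_cases hl : lowV H v
    · rw [if_pos hl, if_pos ⟨hl, y0, hy0, hby0⟩]
      omega
    · rw [if_neg hl]
      by_cases hd : H.degree v = 3
      · rw [if_pos hd, if_neg (fun hh => hl hh.1), if_pos ⟨hd, y0, hy0, hby0⟩]
        omega
      · rw [if_neg hd, if_neg (fun hh => hl hh.1), if_neg (fun hh => hd hh.1)]
  · have hzero : ∀ y, PhiC H v y = 0 := by
      intro y
      unfold PhiC
      rw [if_neg]
      rintro ⟨hadj, hbig⟩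
      exact hb ⟨y, hadj, hbig⟩
    rw [Finset.sum_congr rfl (fun y _ => hzero y)]
    simp

lemma total_charge (hH : H ≤ cubeGraph n) (hc : IsProperEdgeColoring H c)
    (hnr : ¬ HasRainbowCopy H c (pathGraph 5)) :
    ∑ y, ∑ v, PhiC H v y ≤ 2 * (Finset.univ.filter (lowV H)).card := by
  rw [Finset.sum_comm]
  calc ∑ v, ∑ y, PhiC H v y
      ≤ ∑ v, ((if lowV H v ∧ hasBigV H v then 2 else 0) +
          (if relV H v then ∑ u, phiC H u v else 0)) :=
        Finset.sum_le_sum (fun v _ => column_bound hH hc hnr v)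
    _ = (∑ v, if lowV H v ∧ hasBigV H v then 2 else 0) +
          (∑ v, if relV H v then ∑ u, phiC H u v else 0) := Finset.sum_add_distrib
    _ ≤ (∑ v, if lowV H v ∧ hasBigV H v then 2 else 0) +
          (∑ u, if lowV H u ∧ ¬ hasBigV H u then 2 else 0) := by
        gcongr _ + ?_
        · calc (∑ v, if relV H v then ∑ u, phiC H u v else 0)
              = ∑ v ∈ Finset.univ.filter (relV H), ∑ u, phiC H u v := by
                rw [Finset.sum_filter]
            _ = ∑ u, ∑ v ∈ Finset.univ.filter (relV H), phiC H u v := Finset.sum_comm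
            _ ≤ ∑ u, if lowV H u ∧ ¬ hasBigV H u then 2 else 0 := by
                apply Finset.sum_le_sum
                intro u _
                by_cases hu : lowV H u ∧ ¬ hasBigV H u
                · rw [if_pos hu]
                  calc ∑ v ∈ Finset.univ.filter (relV H), phiC H u v
                      ≤ ∑ v, phiC H u v := Finset.sum_le_sum_of_subset (Finset.subset_univ _)
                    _ ≤ 2 := sum_phiC_le hH hc hnr u
                · rw [if_neg hu]
                  have : ∀ v ∈ Finset.univ.filter (relV H), phiC H u v = 0 := by
                    intro v hv
                    rw [Finset.mem_filter] at hv
                    exact phiC_rel_eq_zero hu hv.2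
                  rw [Finset.sum_congr rfl this, Finset.sum_const, smul_zero]
    _ ≤ 2 * (Finset.univ.filter (lowV H)).card := by
        rw [Finset.sum_ite, Finset.sum_ite]
        simp only [Finset.sum_const, Finset.sum_const_zero, smul_eq_mul, add_zero,
          Nat.mul_zero, Nat.zero_add]
        have h1 : (Finset.univ.filter (fun v => lowV H v ∧ hasBigV H v)).card +
            (Finset.univ.filter (fun v => lowV H v ∧ ¬ hasBigV H v)).card =
            (Finset.univ.filter (lowV H)).card := by
          have key := Finset.card_filter_add_card_filter_not
            (s := Finset.univ.filter (lowV H)) (p := hasBigV H)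
          rw [Finset.filter_filter, Finset.filter_filter] at key
          exact key
        omega


lemma low_not_big {v : Fin n → Bool} (h : lowV H v) : ¬ bigV H v := by
  unfold lowV at h
  unfold bigV
  omega

lemma degree_sum_le (hH : H ≤ cubeGraph n) (hc : IsProperEdgeColoring H c)
    (hnr : ¬ HasRainbowCopy H c (pathGraph 5)) :
    ∑ v, H.degree v ≤ 3 * 2 ^ n := by
  classical
  set L : ℕ := (Finset.univ.filter (lowV H)).card with hL
  -- step 1 : sum over big vertices
  have step1 : ∑ y ∈ Finset.univ.filter (bigV H), (H.degree y - 1) ≤ L := by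
    have hA : ∑ y ∈ Finset.univ.filter (bigV H), 2 * (H.degree y - 1) ≤
        ∑ y ∈ Finset.univ.filter (bigV H), ∑ v, PhiC H v y := by
      apply Finset.sum_le_sum
      intro y hy
      rw [Finset.mem_filter] at hy
      exact big_receives hH hc hnr hy.2
    have hB : ∑ y ∈ Finset.univ.filter (bigV H), ∑ v, PhiC H v y ≤
        ∑ y, ∑ v, PhiC H v y :=
      Finset.sum_le_sum_of_subset (Finset.subset_univ _)
    have hC := total_charge hH hc hnr
    have hD : 2 * ∑ y ∈ Finset.univ.filter (bigV H), (H.degree y - 1) =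
        ∑ y ∈ Finset.univ.filter (bigV H), 2 * (H.degree y - 1) := Finset.mul_sum _ _ _
    omega
  have hbigsum : ∑ y ∈ Finset.univ.filter (bigV H), H.degree y ≤
      L + (Finset.univ.filter (bigV H)).card := by
    have hpt : ∀ y ∈ Finset.univ.filter (bigV H), H.degree y = (H.degree y - 1) + 1 := by
      intro y hy
      rw [Finset.mem_filter] at hy
      have := hy.2
      unfold bigV at this
      omega
    have : ∑ y ∈ Finset.univ.filter (bigV H), H.degree y =
        (∑ y ∈ Finset.univ.filter (bigV H), (H.degree y - 1)) +
          (Finset.univ.filter (bigV H)).card := by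
      rw [Finset.sum_congr rfl hpt, Finset.sum_add_distrib, Finset.sum_const, smul_eq_mul,
        mul_one]
    omega
  -- split the whole sum
  have hsplit : (∑ y ∈ Finset.univ.filter (bigV H), H.degree y) +
      (∑ v ∈ Finset.univ.filter (fun v => ¬ bigV H v), H.degree v) = ∑ v, H.degree v :=
    Finset.sum_filter_add_sum_filter_not Finset.univ (bigV H) (fun v => H.degree v)
  -- sum over non-big vertices, split by low
  have hsplit2 : (∑ v ∈ (Finset.univ.filter (fun v => ¬ bigV H v)).filter (lowV H), H.degree v) +
      (∑ v ∈ (Finset.univ.filter (fun v => ¬ bigV H v)).filter (fun v => ¬ lowV H v),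
        H.degree v) =
      ∑ v ∈ Finset.univ.filter (fun v => ¬ bigV H v), H.degree v :=
    Finset.sum_filter_add_sum_filter_not
      (Finset.univ.filter (fun v => ¬ bigV H v)) (lowV H) (fun v => H.degree v)
  -- low part
  have hlowpart : ∑ v ∈ (Finset.univ.filter (fun v => ¬ bigV H v)).filter (lowV H),
      H.degree v ≤ 2 * L := by
    have heq : (Finset.univ.filter (fun v => ¬ bigV H v)).filter (lowV H) =
        Finset.univ.filter (lowV H) := by
      rw [Finset.filter_filter]
      apply Finset.filter_congr
      intro v _
      constructor
      · intro h; exact h.2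
      · intro h; exact ⟨low_not_big h, h⟩
    rw [heq]
    calc ∑ v ∈ Finset.univ.filter (lowV H), H.degree v
        ≤ ∑ _v ∈ Finset.univ.filter (lowV H), 2 := by
          apply Finset.sum_le_sum
          intro v hv
          rw [Finset.mem_filter] at hv
          have := hv.2
          unfold lowV at this
          omega
      _ = 2 * L := by rw [Finset.sum_const, smul_eq_mul, hL, mul_comm]
  -- mid part
  have hmidpart : ∑ v ∈ (Finset.univ.filter (fun v => ¬ bigV H v)).filter (fun v => ¬ lowV H v),
      H.degree v ≤ 3 * ((Finset.univ.filter (fun v => ¬ bigV H v)).filter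
        (fun v => ¬ lowV H v)).card := by
    calc ∑ v ∈ (Finset.univ.filter (fun v => ¬ bigV H v)).filter (fun v => ¬ lowV H v), H.degree v
        ≤ ∑ _v ∈ (Finset.univ.filter (fun v => ¬ bigV H v)).filter (fun v => ¬ lowV H v), 3 := by
          apply Finset.sum_le_sum
          intro v hv
          rw [Finset.mem_filter, Finset.mem_filter] at hv
          have := hv.1.2
          unfold bigV at this
          omega
      _ = _ := by rw [Finset.sum_const, smul_eq_mul, mul_comm]
  -- cardinalities
  have hcards : (Finset.univ.filter (bigV H)).card +
      (Finset.univ.filter (fun v => ¬ bigV H v)).card = 2 ^ n := by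
    have := Finset.card_filter_add_card_filter_not
      (s := (Finset.univ : Finset (Fin n → Bool))) (p := bigV H)
    rwa [Finset.card_univ, Fintype.card_fun, Fintype.card_bool, Fintype.card_fin] at this
  have hcards2 : ((Finset.univ.filter (fun v => ¬ bigV H v)).filter (lowV H)).card +
      ((Finset.univ.filter (fun v => ¬ bigV H v)).filter (fun v => ¬ lowV H v)).card =
      (Finset.univ.filter (fun v => ¬ bigV H v)).card :=
    Finset.card_filter_add_card_filter_not
      (s := Finset.univ.filter (fun v => ¬ bigV H v)) (p := lowV H)
  have hLle : L ≤ ((Finset.univ.filter (fun v => ¬ bigV H v)).filter (lowV H)).card := by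
    apply le_of_eq
    rw [hL]
    congr 1
    rw [Finset.filter_filter]
    apply (Finset.filter_congr _).symm
    intro v _
    constructor
    · intro h; exact h.2
    · intro h; exact ⟨low_not_big h, h⟩
  omega


end Count

/-- Final upper bound -/
lemma edge_upper {n : ℕ} (hn : 1 ≤ n) (H : SimpleGraph (Fin n → Bool))
    (hH : H ≤ cubeGraph n) {c : Sym2 (Fin n → Bool) → ℕ}
    (hc : IsProperEdgeColoring H c) (hnr : ¬ HasRainbowCopy H c (pathGraph 5)) :
    H.edgeSet.ncard ≤ 3 * 2 ^ (n - 1) := by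
  classical
  have hsum := degree_sum_le hH hc hnr
  rw [SimpleGraph.sum_degrees_eq_twice_card_edges] at hsum
  have hncard : H.edgeSet.ncard = H.edgeFinset.card := by
    rw [Set.ncard_eq_toFinset_card']
    congr 1
  have hpow : 2 ^ n = 2 * 2 ^ (n - 1) := by
    calc 2 ^ n = 2 ^ ((n-1) + 1) := by congr 1; omega
      _ = 2 * 2 ^ (n-1) := by rw [pow_succ]; ring
  rw [hpow] at hsum
  omega


section Lower

variable {n : ℕ}

/-- flip one coordinate -/
def flipC (x : Fin n → Bool) (i : Fin n) : Fin n → Bool := Function.update x i (!(x i))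

lemma flipC_same (x : Fin n → Bool) (i : Fin n) : flipC x i i = !(x i) :=
  Function.update_self _ _ _

lemma flipC_ne (x : Fin n → Bool) {i j : Fin n} (h : j ≠ i) : flipC x i j = x j :=
  Function.update_of_ne h _ _

lemma flipC_flip (x : Fin n → Bool) (i : Fin n) : flipC (flipC x i) i = x := by
  funext j
  by_cases hj : j = i
  · subst hj; rw [flipC_same, flipC_same, Bool.not_not]
  · rw [flipC_ne _ hj, flipC_ne _ hj]

lemma flipC_ne_self (x : Fin n → Bool) (i : Fin n) : flipC x i ≠ x := by
  intro h
  have := congrFun h i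
  rw [flipC_same] at this
  exact (Bool.not_ne_self _ this).elim

/-- the subgraph of the cube using only the first three directions -/
def cube3 (n : ℕ) : SimpleGraph (Fin n → Bool) where
  Adj x y := ∃ i : Fin n, i.val < 3 ∧ y = flipC x i
  symm := by
    constructor
    rintro x y ⟨i, hi, rfl⟩
    exact ⟨i, hi, (flipC_flip x i).symm⟩
  loopless := by
    constructor
    rintro x ⟨i, hi, h⟩
    exact flipC_ne_self x i h.symm

lemma cube_adj_flipC (x : Fin n → Bool) (i : Fin n) : (cubeGraph n).Adj x (flipC x i) := by
  rw [CubeAux.cube_adj_iff]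
  refine ⟨i, ?_, ?_⟩
  · rw [flipC_same]; cases x i <;> simp
  · intro j hj; rw [flipC_ne _ hj]

lemma cube3_le : cube3 n ≤ cubeGraph n := by
  rintro x y ⟨i, hi, rfl⟩
  exact cube_adj_flipC x i

/-- the index of the lowest differing coordinate -/
noncomputable def dIdx (x y : Fin n → Bool) : ℕ := sInf {j : ℕ | ∃ h : j < n, x ⟨j, h⟩ ≠ y ⟨j, h⟩}

lemma dIdx_symm (x y : Fin n → Bool) : dIdx x y = dIdx y x := by
  unfold dIdx
  congr 1
  ext j
  exact ⟨fun ⟨h, hne⟩ => ⟨h, hne.symm⟩, fun ⟨h, hne⟩ => ⟨h, hne.symm⟩⟩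

/-- the coloring by direction -/
noncomputable def col3 : Sym2 (Fin n → Bool) → ℕ := Sym2.lift ⟨dIdx, dIdx_symm⟩

lemma col3_mk (x y : Fin n → Bool) : col3 s(x,y) = dIdx x y := rfl

lemma dIdx_flipC (x : Fin n → Bool) (i : Fin n) : dIdx x (flipC x i) = i.val := by
  unfold dIdx
  have hset : {j : ℕ | ∃ h : j < n, x ⟨j, h⟩ ≠ flipC x i ⟨j, h⟩} = {(i.val : ℕ)} := by
    ext j
    simp only [Set.mem_setOf_eq, Set.mem_singleton_iff]
    constructor
    · rintro ⟨h, hne⟩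
      by_contra hji
      have : (⟨j, h⟩ : Fin n) ≠ i := by
        intro he
        exact hji (by rw [← he])
      rw [flipC_ne _ this] at hne
      exact hne rfl
    · rintro rfl
      refine ⟨i.isLt, ?_⟩
      have : (⟨i.val, i.isLt⟩ : Fin n) = i := Fin.ext rfl
      rw [this, flipC_same]
      cases x i <;> simp
  rw [hset, csInf_singleton]

lemma col3_flipC (x : Fin n → Bool) (i : Fin n) : col3 s(x, flipC x i) = i.val := by
  rw [col3_mk, dIdx_flipC]

lemma cube3_proper : IsProperEdgeColoring (cube3 n) col3 := by
  intro e1 he1 e2 he2 hne hshare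
  obtain ⟨w, hw1, hw2⟩ := hshare
  have h1 : e1 = s(w, Sym2.Mem.other hw1) := (Sym2.other_spec hw1).symm
  have h2 : e2 = s(w, Sym2.Mem.other hw2) := (Sym2.other_spec hw2).symm
  rw [h1] at he1 ⊢
  rw [h2] at he2 ⊢
  rw [SimpleGraph.mem_edgeSet] at he1 he2
  obtain ⟨i, hi3, hif⟩ := he1
  obtain ⟨j, hj3, hjf⟩ := he2
  rw [hif, hjf, col3_flipC, col3_flipC]
  intro hij
  apply hne
  rw [h1, h2, hif, hjf]
  have : i = j := Fin.ext hij
  rw [this]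

lemma cube3_no_rainbow : ¬ HasRainbowCopy (cube3 n) col3 (pathGraph 5) := by
  rintro ⟨f, hadj, hrb⟩
  have hpadj : ∀ k : Fin 5, ∀ hk : (k.val + 1) < 5, (pathGraph 5).Adj k ⟨k.val+1, hk⟩ := by
    intro k hk
    rw [pathGraph_adj]
    left
    rfl
  have hcol : ∀ a b : Fin 5, (pathGraph 5).Adj a b → col3 s(f a, f b) < 3 := by
    intro a b hab
    obtain ⟨i, hi3, hif⟩ := hadj hab
    rw [hif, col3_flipC]
    exact hi3
  have a01 : (pathGraph 5).Adj 0 1 := by rw [pathGraph_adj]; left; rfl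
  have a12 : (pathGraph 5).Adj 1 2 := by rw [pathGraph_adj]; left; rfl
  have a23 : (pathGraph 5).Adj 2 3 := by rw [pathGraph_adj]; left; rfl
  have a34 : (pathGraph 5).Adj 3 4 := by rw [pathGraph_adj]; left; rfl
  have c0 := hcol _ _ a01
  have c1 := hcol _ _ a12
  have c2 := hcol _ _ a23
  have c3 := hcol _ _ a34
  have d01 := hrb a01 a12 (by decide)
  have d02 := hrb a01 a23 (by decide)
  have d03 := hrb a01 a34 (by decide)
  have d12 := hrb a12 a23 (by decide)
  have d13 := hrb a12 a34 (by decide)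
  have d23 := hrb a23 a34 (by decide)
  omega


lemma flipC_inj_ne (x : Fin n → Bool) {i j : Fin n} (h : i ≠ j) : flipC x i ≠ flipC x j := by
  intro he
  have := congrFun he i
  rw [flipC_same, flipC_ne x (fun hh => h hh)] at this
  exact (Bool.not_ne_self _ this).elim

lemma cube3_nbr (hn : 3 ≤ n) [DecidableRel (cube3 n).Adj] (x : Fin n → Bool) :
    (cube3 n).neighborFinset x =
      {flipC x ⟨0, by omega⟩, flipC x ⟨1, by omega⟩, flipC x ⟨2, by omega⟩} := by
  ext y
  rw [SimpleGraph.mem_neighborFinset]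
  constructor
  · rintro ⟨i, hi, rfl⟩
    rw [Finset.mem_insert, Finset.mem_insert, Finset.mem_singleton]
    rcases (by omega : i.val = 0 ∨ i.val = 1 ∨ i.val = 2) with h | h | h
    · exact Or.inl (by rw [show i = (⟨0, by omega⟩ : Fin n) from Fin.ext (by simp [h])])
    · exact Or.inr (Or.inl (by rw [show i = (⟨1, by omega⟩ : Fin n) from Fin.ext (by simp [h])]))
    · exact Or.inr (Or.inr (by rw [show i = (⟨2, by omega⟩ : Fin n) from Fin.ext (by simp [h])]))
  · intro hy
    rw [Finset.mem_insert, Finset.mem_insert, Finset.mem_singleton] at hy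
    rcases hy with rfl | rfl | rfl
    · exact ⟨⟨0, by omega⟩, by simp, rfl⟩
    · exact ⟨⟨1, by omega⟩, by simp, rfl⟩
    · exact ⟨⟨2, by omega⟩, by simp, rfl⟩

lemma cube3_degree (hn : 3 ≤ n) [DecidableRel (cube3 n).Adj] (x : Fin n → Bool) :
    (cube3 n).degree x = 3 := by
  rw [SimpleGraph.degree, cube3_nbr hn x]
  have h01 : flipC x ⟨0, by omega⟩ ≠ flipC x ⟨1, by omega⟩ :=
    flipC_inj_ne x (by intro h; exact absurd (congrArg Fin.val h) (by simp))
  have h02 : flipC x ⟨0, by omega⟩ ≠ flipC x ⟨2, by omega⟩ :=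
    flipC_inj_ne x (by intro h; exact absurd (congrArg Fin.val h) (by simp))
  have h12 : flipC x ⟨1, by omega⟩ ≠ flipC x ⟨2, by omega⟩ :=
    flipC_inj_ne x (by intro h; exact absurd (congrArg Fin.val h) (by simp))
  rw [Finset.card_insert_of_notMem (by
      rw [Finset.mem_insert, Finset.mem_singleton]
      rintro (h | h)
      exacts [h01 h, h02 h]),
    Finset.card_insert_of_notMem (by rw [Finset.mem_singleton]; exact h12),
    Finset.card_singleton]

lemma cube3_ncard (hn : 3 ≤ n) : (cube3 n).edgeSet.ncard = 3 * 2 ^ (n - 1) := by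
  classical
  have hsum := SimpleGraph.sum_degrees_eq_twice_card_edges (cube3 n)
  rw [Finset.sum_congr rfl (fun x _ => cube3_degree hn x), Finset.sum_const,
    Finset.card_univ, Fintype.card_fun, Fintype.card_bool, Fintype.card_fin,
    smul_eq_mul] at hsum
  have hncard : (cube3 n).edgeSet.ncard = (cube3 n).edgeFinset.card := by
    rw [Set.ncard_eq_toFinset_card']
    congr 1
  have hpow : 2 ^ n = 2 * 2 ^ (n - 1) := by
    calc 2 ^ n = 2 ^ ((n-1) + 1) := by congr 1; omega
      _ = 2 * 2 ^ (n-1) := by rw [pow_succ]; ring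
  rw [hpow] at hsum
  omega

end Lower
end CubeAux

/-- For every `n ≥ 3`, `ex*(Q_n, P_4) = 3 · 2^(n-1)`. -/
theorem stmt6 (n : ℕ) (hn : 3 ≤ n) :
    rainbowExtremalNumber (cubeGraph n) (SimpleGraph.pathGraph 5) = 3 * 2 ^ (n - 1) := by
  have hmem : (3 * 2 ^ (n-1)) ∈
      {m | ∃ H : SimpleGraph (Fin n → Bool), H ≤ cubeGraph n ∧
        RainbowFree H (SimpleGraph.pathGraph 5) ∧ m = H.edgeSet.ncard} :=
    ⟨CubeAux.cube3 n, CubeAux.cube3_le,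
      ⟨CubeAux.col3, CubeAux.cube3_proper, CubeAux.cube3_no_rainbow⟩,
      (CubeAux.cube3_ncard hn).symm⟩
  have hub : ∀ m ∈ {m | ∃ H : SimpleGraph (Fin n → Bool), H ≤ cubeGraph n ∧
      RainbowFree H (SimpleGraph.pathGraph 5) ∧ m = H.edgeSet.ncard},
      m ≤ 3 * 2 ^ (n-1) := by
    rintro m ⟨H, hle, ⟨c, hc, hnr⟩, rfl⟩
    exact CubeAux.edge_upper (by omega) H hle hc hnr
  rw [rainbowExtremalNumber]
  exact le_antisymm (csSup_le ⟨_, hmem⟩ hub) (le_csSup ⟨_, hub⟩ hmem)
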